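/- (Lemma B.1: lattice Sobolev embedding, uniform in the lattice spacing) Let d ≥ 1 and ε = 1/N for a positive integer N, and set I^d_ε = [0,1]^d ∩ (εℤ)^d. There is a constant C_d depending only on d (not on ε or u) such that for every u : (εℤ)^d → ℝ and every subset X ⊂ I^d_ε: sup_{x ∈ X} |u(x)| ≤ C_d ‖u‖_{H_d(I^d_ε)}. -/

import Mathlib

open scoped ENNReal BigOperators

namespace FRD

abbrev Pt (d : ℕ) := Fin d → ℝ
abbrev Idx (d : ℕ) := Fin d → ℤ

variable {d : ℕ}

/-- The lattice point of `(εℤ)^d` with integer coordinates `k`. -/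
noncomputable def toPt (ε : ℝ) (k : Idx d) : Pt d := fun i => ε * (k i : ℝ)

/-- The lattice `(εℤ)^d` as a subset of `ℝ^d`. -/
def latt (d : ℕ) (ε : ℝ) : Set (Pt d) := Set.range (toPt (d := d) ε)

/-- Signed unit direction: `e.1` is the coordinate, `e.2` the sign. -/
noncomputable def sdir (d : ℕ) (e : Fin d × Bool) : Pt d :=
  Pi.single e.1 (if e.2 then (1 : ℝ) else -1)

/-- Forward/backward lattice derivative in the signed direction `e`. -/
noncomputable def nabla (ε : ℝ) (e : Fin d × Bool) (f : Pt d → ℝ) (x : Pt d) : ℝ :=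
  ε⁻¹ * (f (x + ε • sdir d e) - f x)

/-- Iterated lattice derivative. -/
noncomputable def nablaList (ε : ℝ) : List (Fin d × Bool) → (Pt d → ℝ) → Pt d → ℝ
  | [], f => f
  | e :: es, f => nabla ε e (nablaList ε es f)

/-- Lattice Laplacian `Δ_ε`. -/
noncomputable def latLap (ε : ℝ) (f : Pt d → ℝ) (x : Pt d) : ℝ :=
  ε⁻¹ ^ 2 * ∑ μ : Fin d,
    (f (x + ε • (Pi.single μ 1 : Pt d)) + f (x - ε • (Pi.single μ 1 : Pt d)) - 2 * f x)

/-- Open cube of edge length `R` centered at `z` (sup-metric). -/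
def cubeC (z : Pt d) (R : ℝ) : Set (Pt d) := {x | ∀ i, |x i - z i| < R / 2}

/-- `U_ε(R)` (centered at `z`). -/
def UC (ε : ℝ) (z : Pt d) (R : ℝ) : Set (Pt d) := cubeC z R ∩ latt d ε

/-- Lattice boundary `∂U_ε(R)` (centered at `z`). -/
def bdryC (ε : ℝ) (z : Pt d) (R : ℝ) : Set (Pt d) :=
  {y | y ∈ latt d ε ∧ y ∉ UC ε z R ∧ ∃ x ∈ UC ε z R, ‖x - y‖ = ε}

/-- `Ū_ε(R) = U_ε(R) ∪ ∂U_ε(R)`. -/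
def clC (ε : ℝ) (z : Pt d) (R : ℝ) : Set (Pt d) := UC ε z R ∪ bdryC ε z R

/-- `h` solves the lattice Dirichlet problem on the cube of edge `R` centered at `z`,
with mass `a` and boundary data `f`. -/
def IsDirSol (ε : ℝ) (z : Pt d) (R a : ℝ) (f h : Pt d → ℝ) : Prop :=
  (∀ x ∈ UC ε z R, a * h x - latLap ε h x = 0) ∧ ∀ x ∈ bdryC ε z R, h x = f x

/-- Lattice integral of `F` over the lattice points lying in `X` (`ℝ≥0∞`-valued). -/
noncomputable def eint (ε : ℝ) (X : Set (Pt d)) (F : Pt d → ℝ) : ℝ≥0∞ :=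
  ∑' k : Idx d, Set.indicator X (fun x => ENNReal.ofReal (ε ^ d * F x)) (toPt ε k)

/-- Squared lattice Sobolev norm `‖f‖²_{H_K(X_ε)}`. -/
noncomputable def sobSq (ε : ℝ) (K : ℕ) (X : Set (Pt d)) (f : Pt d → ℝ) : ℝ≥0∞ :=
  ∑ j ∈ Finset.range (K + 1), (2 : ℝ≥0∞)⁻¹ ^ j *
    ∑ es : Fin j → Fin d × Bool,
      eint ε X fun x => (nablaList ε (List.ofFn es) f x) ^ 2

/-- Lattice Sobolev norm `‖f‖_{H_K(X_ε)}`. -/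
noncomputable def sobNorm (ε : ℝ) (K : ℕ) (X : Set (Pt d)) (f : Pt d → ℝ) : ℝ≥0∞ :=
  sobSq ε K X f ^ (1/2 : ℝ)

/-- Real-valued lattice integral over the whole lattice. -/
noncomputable def lint (ε : ℝ) (F : Pt d → ℝ) : ℝ := ε ^ d * ∑' k : Idx d, F (toPt ε k)

/-- Squared weighted lattice Sobolev norm `‖f‖²_{φ,K}`. -/
noncomputable def wSobSq (ε : ℝ) (K : ℕ) (φ : Pt d → ℝ) (f : Pt d → ℝ) : ℝ≥0∞ :=
  ∑ j ∈ Finset.range (K + 1), (2 : ℝ≥0∞)⁻¹ ^ j *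
    ∑ es : Fin j → Fin d × Bool,
      ∑' k : Idx d, ENNReal.ofReal
        (ε ^ d * φ (toPt ε k) * (nablaList ε (List.ofFn es) f (toPt ε k)) ^ 2)

/-- Weighted lattice Sobolev norm `‖f‖_{φ,K}`. -/
noncomputable def wSobNorm (ε : ℝ) (K : ℕ) (φ : Pt d → ℝ) (f : Pt d → ℝ) : ℝ≥0∞ :=
  wSobSq ε K φ f ^ (1/2 : ℝ)


/-- The unit cube `[0,1]^d`. -/
def Icube (d : ℕ) : Set (Pt d) := {x | ∀ i, x i ∈ Set.Icc (0 : ℝ) 1}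


private lemma int_Ico_succ_insert (p q : ℤ) (h : p ≤ q) :
    Finset.Ico p (q + 1) = insert q (Finset.Ico p q) := by
  ext t; simp only [Finset.mem_Ico, Finset.mem_insert]; omega

private lemma abs_telescope (a : ℤ → ℝ) (p : ℤ) (m : ℕ) :
    |a (p + m) - a p| ≤ ∑ t ∈ Finset.Ico p (p + m), |a (t + 1) - a t| := by
  induction m with
  | zero => simp
  | succ m ih =>
    have hcast : p + ((m : ℕ) + 1 : ℕ) = (p + (m : ℤ)) + 1 := by push_cast; ring
    have h1 : Finset.Ico p (p + ((m : ℕ) + 1 : ℕ)) = insert (p + (m:ℤ)) (Finset.Ico p (p + (m:ℤ))) := by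
      rw [hcast]
      exact int_Ico_succ_insert _ _ (by omega)
    rw [h1, Finset.sum_insert (by simp)]
    have h2 : |a (p + ((m : ℕ) + 1 : ℕ)) - a p| ≤ |a ((p + (m:ℤ)) + 1) - a (p + (m:ℤ))| + |a (p + (m:ℤ)) - a p| := by
      rw [hcast]
      exact abs_sub_le _ _ _
    exact h2.trans (by linarith)

private lemma abs_sub_le_sum_Icc (N : ℕ) (a : ℤ → ℝ) (p q : ℤ)
    (hp : p ∈ Finset.Icc (0:ℤ) (N:ℤ)) (hq : q ∈ Finset.Icc (0:ℤ) (N:ℤ)) :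
    |a p - a q| ≤ ∑ t ∈ Finset.Icc (0:ℤ) (N:ℤ), |a (t + 1) - a t| := by
  simp only [Finset.mem_Icc] at hp hq
  have main : ∀ r s : ℤ, 0 ≤ r → s ≤ (N:ℤ) → r ≤ s →
      |a s - a r| ≤ ∑ t ∈ Finset.Icc (0:ℤ) (N:ℤ), |a (t + 1) - a t| := by
    intro r s hr hs hrs
    have hm : r + (((s - r).toNat : ℕ) : ℤ) = s := by omega
    have h1 := abs_telescope a r (s - r).toNat
    rw [hm] at h1
    refine h1.trans (Finset.sum_le_sum_of_subset_of_nonneg ?_ (fun _ _ _ => abs_nonneg _))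
    intro t ht
    simp only [Finset.mem_Ico] at ht
    simp only [Finset.mem_Icc]
    omega
  rcases le_total q p with h | h
  · exact main q p hq.1 hp.2 h
  · rw [abs_sub_comm]; exact main p q hp.1 hq.2 h

private lemma oneD_avg (N : ℕ) (hN : 0 < N) (a : ℤ → ℝ) (j : ℤ)
    (hj : j ∈ Finset.Icc (0:ℤ) (N:ℤ)) :
    |a j| ≤ (N:ℝ)⁻¹ * ∑ t ∈ Finset.Icc (0:ℤ) (N:ℤ), |a t|
      + ∑ t ∈ Finset.Icc (0:ℤ) (N:ℤ), |a (t + 1) - a t| := by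
  set D := ∑ t ∈ Finset.Icc (0:ℤ) (N:ℤ), |a (t + 1) - a t| with hD
  set S := ∑ t ∈ Finset.Icc (0:ℤ) (N:ℤ), |a t| with hS
  have key : ∀ q ∈ Finset.Icc (0:ℤ) (N:ℤ), |a j| ≤ |a q| + D := by
    intro q hq
    have h1 : |a j| ≤ |a q| + |a j - a q| := by
      have := abs_add_le (a q) (a j - a q); simpa using this
    refine h1.trans ?_
    gcongr
    exact abs_sub_le_sum_Icc N a j q hj hq
  have hcard : (Finset.Icc (0:ℤ) (N:ℤ)).card = N + 1 := by
    rw [Int.card_Icc]; omega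
  have hNpos : (0:ℝ) < N := by exact_mod_cast hN
  have hSnn : 0 ≤ S := Finset.sum_nonneg fun _ _ => abs_nonneg _
  have h2 : ((N:ℝ) + 1) * |a j| ≤ S + ((N:ℝ) + 1) * D := by
    have h3 := Finset.sum_le_sum key
    rw [Finset.sum_const, Finset.sum_add_distrib, Finset.sum_const, hcard] at h3
    push_cast [nsmul_eq_mul] at h3
    linarith
  have h5 : |a j| ≤ (S + ((N:ℝ)+1) * D) / ((N:ℝ)+1) := by
    rw [le_div_iff₀ (by positivity)]
    linarith
  have h6 : (S + ((N:ℝ)+1)*D)/((N:ℝ)+1) = S/((N:ℝ)+1) + D := by field_simp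
  have h7 : S/((N:ℝ)+1) ≤ S/(N:ℝ) := by
    apply div_le_div_of_nonneg_left hSnn hNpos
    linarith
  rw [inv_mul_eq_div]
  linarith
private lemma nablaList_append (ε : ℝ) (l₁ l₂ : List (Fin d × Bool)) (f : Pt d → ℝ) :
    nablaList ε (l₁ ++ l₂) f = nablaList ε l₁ (nablaList ε l₂ f) := by
  induction l₁ with
  | nil => rfl
  | cons e l ih =>
    show nabla ε e (nablaList ε (l ++ l₂) f) = _
    rw [ih]; rfl

private lemma step1D (N : ℕ) (hN : 0 < N) (v : Pt d → ℝ) (i : Fin d) (k : Idx d)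
    (hki : k i ∈ Finset.Icc (0:ℤ) (N:ℤ)) :
    |v (toPt (N:ℝ)⁻¹ k)| ≤ (N:ℝ)⁻¹ * ∑ t ∈ Finset.Icc (0:ℤ) (N:ℤ),
      (|v (toPt (N:ℝ)⁻¹ (Function.update k i t))| +
       |nabla (N:ℝ)⁻¹ (i, true) v (toPt (N:ℝ)⁻¹ (Function.update k i t))|) := by
  set ε := (N:ℝ)⁻¹ with hε
  have hεpos : 0 < ε := by positivity
  set a : ℤ → ℝ := fun t => v (toPt ε (Function.update k i t)) with ha
  have hpt : ∀ t : ℤ, toPt ε (Function.update k i t) + ε • sdir d (i, true)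
      = toPt ε (Function.update k i (t + 1)) := by
    intro t; funext j
    by_cases hji : j = i
    · subst hji
      simp only [toPt, sdir, Pi.add_apply, Pi.smul_apply, smul_eq_mul,
        Function.update_self, if_true, Pi.single_eq_same]
      push_cast; ring
    · simp only [toPt, sdir, Pi.add_apply, Pi.smul_apply, smul_eq_mul,
        Function.update_of_ne hji, Pi.single_eq_of_ne hji, mul_zero, add_zero]
  have hnab : ∀ t : ℤ, |nabla ε (i, true) v (toPt ε (Function.update k i t))|
      = ε⁻¹ * |a (t + 1) - a t| := by
    intro t
    rw [nabla, hpt t, abs_mul, abs_inv, abs_of_pos hεpos]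
  have h0 : a (k i) = v (toPt ε k) := by rw [ha]; simp [Function.update_eq_self]
  have havg := oneD_avg N hN a (k i) hki
  rw [h0] at havg
  refine havg.trans (le_of_eq ?_)
  rw [Finset.sum_add_distrib, mul_add]
  congr 1
  rw [Finset.sum_congr rfl (fun t _ => hnab t), ← Finset.mul_sum, ← mul_assoc,
    mul_inv_cancel₀ (ne_of_gt hεpos), one_mul]

noncomputable def BB (N : ℕ) (ε : ℝ) : List (Fin d) → (Pt d → ℝ) → Idx d → ℝ
  | [], v, k => |v (toPt ε k)|
  | i :: L, v, k => ε * ∑ t ∈ Finset.Icc (0:ℤ) (N:ℤ),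
      (BB N ε L v (Function.update k i t) + BB N ε L (nabla ε (i, true) v) (Function.update k i t))

private lemma update_mem_Icc {N : ℕ} {k : Idx d} (hk : ∀ j, k j ∈ Finset.Icc (0:ℤ) (N:ℤ))
    {i : Fin d} {t : ℤ} (ht : t ∈ Finset.Icc (0:ℤ) (N:ℤ)) :
    ∀ j, Function.update k i t j ∈ Finset.Icc (0:ℤ) (N:ℤ) := by
  intro j
  by_cases hji : j = i
  · subst hji; simpa using ht
  · simpa [Function.update_of_ne hji] using hk j

private lemma le_BB (N : ℕ) (hN : 0 < N) (L : List (Fin d)) :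
    ∀ (v : Pt d → ℝ) (k : Idx d), (∀ j, k j ∈ Finset.Icc (0:ℤ) (N:ℤ)) →
    |v (toPt (N:ℝ)⁻¹ k)| ≤ BB N (N:ℝ)⁻¹ L v k := by
  induction L with
  | nil => intro v k _; rw [BB]
  | cons i L ih =>
    intro v k hk
    refine (step1D N hN v i k (hk i)).trans ?_
    rw [BB]
    refine mul_le_mul_of_nonneg_left (Finset.sum_le_sum fun t ht => ?_) (by positivity)
    exact add_le_add (ih v _ (update_mem_Icc hk ht)) (ih _ _ (update_mem_Icc hk ht))
noncomputable def gridS (N : ℕ) (ε : ℝ) : List (Fin d) → (Idx d → ℝ) → Idx d → ℝ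
  | [], g, k => g k
  | i :: L, g, k => ε * ∑ t ∈ Finset.Icc (0:ℤ) (N:ℤ), gridS N ε L g (Function.update k i t)

noncomputable def KK (d N : ℕ) : Finset (Idx d) := Fintype.piFinset fun _ : Fin d => Finset.Icc (0:ℤ) (N:ℤ)

private lemma mem_KK_iff {N : ℕ} {k : Idx d} :
    k ∈ KK d N ↔ ∀ j, k j ∈ Finset.Icc (0:ℤ) (N:ℤ) := by
  simp [KK, Fintype.mem_piFinset]

open Classical in
private lemma gridS_eq_weighted (N : ℕ) (ε : ℝ) :
    ∀ (L : List (Fin d)), L.Nodup → ∀ (g : Idx d → ℝ) (k : Idx d), k ∈ KK d N →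
    gridS N ε L g k = ε ^ L.length * ∑ m ∈ KK d N,
      (∏ j, if j ∈ L ∨ m j = k j then (1:ℝ) else 0) * g m := by
  intro L
  induction L with
  | nil =>
    intro _ g k hk
    have h1 : ∀ m ∈ KK d N,
        (∏ j, if j ∈ ([] : List (Fin d)) ∨ m j = k j then (1:ℝ) else 0) * g m
        = if m = k then g m else 0 := by
      intro m _
      rw [show (∏ j, if j ∈ ([] : List (Fin d)) ∨ m j = k j then (1:ℝ) else 0)
          = ∏ j, if m j = k j then (1:ℝ) else 0 by
        exact Finset.prod_congr rfl fun j _ => by simp]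
      rw [Finset.prod_boole]
      by_cases hmk : m = k
      · subst hmk; simp
      · have : ¬ (∀ j ∈ Finset.univ, m j = k j) := by
          intro hcon
          exact hmk (funext fun j => hcon j (Finset.mem_univ j))
        rw [if_neg this, if_neg hmk, zero_mul]
    rw [Finset.sum_congr rfl h1, Finset.sum_ite_eq' (KK d N) k g, if_pos hk]
    simp [gridS]
  | cons i L ih =>
    intro hnd g k hk
    obtain ⟨hiL, hLnd⟩ := List.nodup_cons.mp hnd
    have hupdmem : ∀ t ∈ Finset.Icc (0:ℤ) (N:ℤ), Function.update k i t ∈ KK d N := by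
      intro t ht
      exact mem_KK_iff.mpr (update_mem_Icc (mem_KK_iff.mp hk) ht)
    rw [gridS, Finset.sum_congr rfl (fun t ht => ih hLnd g _ (hupdmem t ht)),
      ← Finset.mul_sum, ← mul_assoc, show ε * ε ^ L.length = ε ^ (i :: L).length by
        rw [List.length_cons, pow_succ]; ring]
    congr 1
    rw [Finset.sum_comm]
    refine Finset.sum_congr rfl fun m hm => ?_
    have hmIcc := mem_KK_iff.mp hm
    set P := ∏ j ∈ Finset.univ.erase i, if j ∈ L ∨ m j = k j then (1:ℝ) else 0 with hP
    have claim1 : ∀ t : ℤ,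
        (∏ j, if j ∈ L ∨ m j = Function.update k i t j then (1:ℝ) else 0)
        = (if m i = t then (1:ℝ) else 0) * P := by
      intro t
      rw [← Finset.mul_prod_erase Finset.univ _ (Finset.mem_univ i)]
      congr 1
      · simp [hiL, Function.update_self]
      · refine Finset.prod_congr rfl fun j hj => ?_
        have hji : j ≠ i := Finset.ne_of_mem_erase hj
        rw [Function.update_of_ne hji]
    have claim3 : (∏ j, if j ∈ (i :: L) ∨ m j = k j then (1:ℝ) else 0) = P := by
      rw [← Finset.mul_prod_erase Finset.univ _ (Finset.mem_univ i)]
      have : (if i ∈ (i :: L) ∨ m i = k i then (1:ℝ) else 0) = 1 := by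
        simp
      rw [this, one_mul]
      refine Finset.prod_congr rfl fun j hj => ?_
      have hji : j ≠ i := Finset.ne_of_mem_erase hj
      have : (j ∈ (i :: L) ∨ m j = k j) ↔ (j ∈ L ∨ m j = k j) := by
        simp [List.mem_cons, hji]
      rw [if_congr this rfl rfl]
    have hsum1 : (∑ t ∈ Finset.Icc (0:ℤ) (N:ℤ), if m i = t then (1:ℝ) else 0) = 1 := by
      rw [Finset.sum_ite_eq (Finset.Icc (0:ℤ) (N:ℤ)) (m i) (fun _ => (1:ℝ))]
      exact if_pos (hmIcc i)
    rw [Finset.sum_congr rfl (fun t _ => by rw [claim1 t]), claim3, ← Finset.sum_mul,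
      ← Finset.sum_mul, hsum1, one_mul]

open Classical in
private lemma gridS_le_full (N : ℕ) (ε : ℝ) (hε : 0 ≤ ε) (L : List (Fin d)) (hnd : L.Nodup)
    (g : Idx d → ℝ) (hg : ∀ m, 0 ≤ g m) (k : Idx d) (hk : k ∈ KK d N) :
    gridS N ε L g k ≤ ε ^ L.length * ∑ m ∈ KK d N, g m := by
  rw [gridS_eq_weighted N ε L hnd g k hk]
  refine mul_le_mul_of_nonneg_left (Finset.sum_le_sum fun m _ => ?_) (by positivity)
  have hw : (∏ j, if j ∈ L ∨ m j = k j then (1:ℝ) else 0) ≤ 1 := by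
    apply Finset.prod_le_one
    · intro j _; positivity
    · intro j _; split <;> norm_num
  calc (∏ j, if j ∈ L ∨ m j = k j then (1:ℝ) else 0) * g m
      ≤ 1 * g m := mul_le_mul_of_nonneg_right hw (hg m)
    _ = g m := one_mul _
private lemma list_sum_map_add {α : Type*} (l : List α) (f g : α → ℝ) :
    (l.map (fun a => f a + g a)).sum = (l.map f).sum + (l.map g).sum := by
  induction l with
  | nil => simp
  | cons a l ih => simp [ih]; ring

private lemma list_sum_map_mul {α : Type*} (c : ℝ) (l : List α) (f : α → ℝ) :
    (l.map (fun a => c * f a)).sum = c * (l.map f).sum := by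
  induction l with
  | nil => simp
  | cons a l ih => simp [ih]; ring

private lemma list_sum_map_finsum_comm {α β : Type*} (l : List α) (s : Finset β) (F : α → β → ℝ) :
    (l.map (fun a => ∑ b ∈ s, F a b)).sum = ∑ b ∈ s, (l.map (fun a => F a b)).sum := by
  induction l with
  | nil => simp
  | cons a l ih => simp [ih, Finset.sum_add_distrib]

private lemma G_cons (ε : ℝ) (i : Fin d) (S : List (Fin d)) (v : Pt d → ℝ) :
    (fun m : Idx d => |nablaList ε (((i :: S).reverse).map (fun i => (i, true))) v (toPt ε m)|)
    = fun m : Idx d => |nablaList ε ((S.reverse).map (fun i => (i, true))) (nabla ε (i, true) v) (toPt ε m)| := by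
  funext m
  rw [List.reverse_cons, List.map_append, nablaList_append]
  rfl

private lemma BB_eq_leaves (N : ℕ) (ε : ℝ) :
    ∀ (L : List (Fin d)) (v : Pt d → ℝ) (k : Idx d),
    BB N ε L v k = (L.sublists'.map (fun S =>
      gridS N ε L (fun m => |nablaList ε ((S.reverse).map (fun i => (i, true))) v (toPt ε m)|) k)).sum := by
  intro L
  induction L with
  | nil =>
    intro v k
    simp only [List.sublists'_nil, List.map_cons, List.map_nil, List.sum_cons, List.sum_nil,
      add_zero, List.reverse_nil]
    rw [BB, gridS]
    rfl
  | cons i L ih =>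
    intro v k
    rw [BB]
    have step1 : ∀ t ∈ Finset.Icc (0:ℤ) (N:ℤ),
        BB N ε L v (Function.update k i t) + BB N ε L (nabla ε (i, true) v) (Function.update k i t)
        = (L.sublists'.map (fun S => gridS N ε L
            (fun m => |nablaList ε ((S.reverse).map (fun i => (i, true))) v (toPt ε m)|)
            (Function.update k i t))).sum
          + (L.sublists'.map (fun S => gridS N ε L
            (fun m => |nablaList ε ((S.reverse).map (fun i => (i, true))) (nabla ε (i, true) v) (toPt ε m)|)
            (Function.update k i t))).sum := by
      intro t _
      rw [ih v _, ih (nabla ε (i, true) v) _]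
    rw [Finset.sum_congr rfl step1, Finset.sum_add_distrib, mul_add]
    rw [List.sublists'_cons, List.map_append, List.sum_append, List.map_map]
    congr 1
    · -- first half
      rw [← list_sum_map_finsum_comm, ← list_sum_map_mul]
      refine congrArg List.sum (List.map_congr_left fun S _ => ?_)
      rw [gridS]
    · -- second half
      rw [← list_sum_map_finsum_comm, ← list_sum_map_mul]
      refine congrArg List.sum (List.map_congr_left fun S _ => ?_)
      show ε * ∑ t ∈ Finset.Icc (0:ℤ) (N:ℤ), gridS N ε L
          (fun m => |nablaList ε ((S.reverse).map (fun i => (i, true))) (nabla ε (i, true) v) (toPt ε m)|)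
          (Function.update k i t)
        = gridS N ε (i :: L)
          (fun m => |nablaList ε (((i :: S).reverse).map (fun i => (i, true))) v (toPt ε m)|) k
    -- use G_cons
      rw [G_cons, gridS]
private lemma toPt_mem (N : ℕ) (hN : 0 < N) {m : Idx d} (hm : m ∈ KK d N) :
    toPt (N:ℝ)⁻¹ m ∈ Icube d ∩ latt d (N:ℝ)⁻¹ := by
  have hNpos : (0:ℝ) < N := by exact_mod_cast hN
  constructor
  · intro i
    have h := Finset.mem_Icc.mp (mem_KK_iff.mp hm i)
    have h0 : (0:ℝ) ≤ (m i : ℝ) := by exact_mod_cast h.1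
    have h1 : (m i : ℝ) ≤ (N:ℝ) := by exact_mod_cast h.2
    constructor
    · show (0:ℝ) ≤ (N:ℝ)⁻¹ * (m i : ℝ)
      positivity
    · show (N:ℝ)⁻¹ * (m i : ℝ) ≤ 1
      rw [← inv_mul_cancel₀ (ne_of_gt hNpos)]
      gcongr
  · exact ⟨m, rfl⟩

private lemma two_pow_rpow_half (n : ℕ) :
    ((2:ℝ≥0∞) ^ (2 * n)) ^ ((1:ℝ)/2) = (2:ℝ≥0∞) ^ n := by
  rw [← ENNReal.rpow_natCast (2:ℝ≥0∞) (2*n), ← ENNReal.rpow_mul]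
  push_cast
  rw [show ((2:ℝ) * n) * (1/2) = (n:ℝ) by ring, ENNReal.rpow_natCast]

private lemma leaf_bound (N : ℕ) (hN : 0 < N) (u : Pt d → ℝ) (l : List (Fin d × Bool))
    (hl : l.length ≤ d) :
    ENNReal.ofReal ((N:ℝ)⁻¹ ^ d * ∑ m ∈ KK d N, |nablaList (N:ℝ)⁻¹ l u (toPt (N:ℝ)⁻¹ m)|)
      ≤ (2:ℝ≥0∞) ^ (2 * d) *
        sobNorm (N:ℝ)⁻¹ d (Icube d ∩ latt d (N:ℝ)⁻¹) u := by
  set ε := (N:ℝ)⁻¹ with hεdef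
  have hNpos : (0:ℝ) < N := by exact_mod_cast hN
  have hε : 0 < ε := by positivity
  have hεN : ε * (N:ℝ) = 1 := inv_mul_cancel₀ (ne_of_gt hNpos)
  have hε1 : ε ≤ 1 := by
    rw [hεdef]
    apply inv_le_one_of_one_le₀
    exact_mod_cast hN
  set w : Idx d → ℝ := fun m => nablaList ε l u (toPt ε m) with hw
  set T : ℝ := ε ^ d * ∑ m ∈ KK d N, |w m| with hT
  set R : ℝ := ε ^ d * ∑ m ∈ KK d N, (w m) ^ 2 with hR
  set I : Set (Pt d) := Icube d ∩ latt d ε with hI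
  have hSnn : (0:ℝ) ≤ ∑ m ∈ KK d N, (w m) ^ 2 := Finset.sum_nonneg fun _ _ => sq_nonneg _
  have hT0 : 0 ≤ T := by
    rw [hT]
    have : (0:ℝ) ≤ ∑ m ∈ KK d N, |w m| := Finset.sum_nonneg fun _ _ => abs_nonneg _
    positivity
  -- cardinality of the grid
  have hcard : (KK d N).card = (N + 1) ^ d := by
    rw [KK, Fintype.card_piFinset]
    have h1 : ∀ i : Fin d, (Finset.Icc (0:ℤ) (N:ℤ)).card = N + 1 := fun _ => by
      rw [Int.card_Icc]; omega
    rw [Finset.prod_congr rfl (fun i _ => h1 i), Finset.prod_const, Finset.card_univ,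
      Fintype.card_fin]
  -- Cauchy-Schwarz
  have hCS : (∑ m ∈ KK d N, |w m|) ^ 2 ≤ ((N:ℝ) + 1) ^ d * ∑ m ∈ KK d N, (w m) ^ 2 := by
    have h := sq_sum_le_card_mul_sum_sq (s := KK d N) (f := fun m => |w m|)
    simp only [sq_abs] at h
    have hc : ((KK d N).card : ℝ) = ((N:ℝ) + 1) ^ d := by
      rw [hcard]; push_cast; ring
    rwa [hc] at h
  have hkey : ε ^ 2 * ((N:ℝ) + 1) ≤ 2 * ε := by nlinarith
  have hT2 : T ^ 2 ≤ 2 ^ d * R := by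
    have h1 : T ^ 2 = (ε ^ 2) ^ d * (∑ m ∈ KK d N, |w m|) ^ 2 := by
      rw [hT]; ring
    have h2 : (ε ^ 2) ^ d * (∑ m ∈ KK d N, |w m|) ^ 2
        ≤ (ε ^ 2) ^ d * (((N:ℝ) + 1) ^ d * ∑ m ∈ KK d N, (w m) ^ 2) := by
      apply mul_le_mul_of_nonneg_left hCS (by positivity)
    have h3 : (ε ^ 2) ^ d * (((N:ℝ) + 1) ^ d * ∑ m ∈ KK d N, (w m) ^ 2)
        = (ε ^ 2 * ((N:ℝ) + 1)) ^ d * ∑ m ∈ KK d N, (w m) ^ 2 := by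
      rw [mul_pow]; ring
    have h4 : (ε ^ 2 * ((N:ℝ) + 1)) ^ d * ∑ m ∈ KK d N, (w m) ^ 2
        ≤ (2 * ε) ^ d * ∑ m ∈ KK d N, (w m) ^ 2 := by
      apply mul_le_mul_of_nonneg_right _ hSnn
      exact pow_le_pow_left₀ (by positivity) hkey d
    have h5 : (2 * ε) ^ d * ∑ m ∈ KK d N, (w m) ^ 2 = 2 ^ d * R := by
      rw [hR, mul_pow]; ring
    linarith
  -- ofReal R ≤ eint
  have hR_le : ENNReal.ofReal R ≤ eint ε I fun x => (nablaList ε l u x) ^ 2 := by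
    have e1 : ENNReal.ofReal R = ∑ m ∈ KK d N, ENNReal.ofReal (ε ^ d * (w m) ^ 2) := by
      rw [hR, Finset.mul_sum]
      exact ENNReal.ofReal_sum_of_nonneg fun m _ => by positivity
    have e2 : ∀ m ∈ KK d N, ENNReal.ofReal (ε ^ d * (w m) ^ 2)
        = I.indicator (fun x => ENNReal.ofReal (ε ^ d * (nablaList ε l u x) ^ 2)) (toPt ε m) := by
      intro m hm
      rw [Set.indicator_of_mem (toPt_mem N hN hm)]
    rw [e1, Finset.sum_congr rfl e2]
    exact ENNReal.sum_le_tsum _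
  -- eint ≤ 2^d * sobSq
  have h_eint_le : (eint ε I fun x => (nablaList ε l u x) ^ 2) ≤ 2 ^ d * sobSq ε d I u := by
    set j := l.length with hj
    have hjlt : j < d + 1 := Nat.lt_succ_of_le hl
    have t1 : (eint ε I fun x => (nablaList ε l u x) ^ 2)
        ≤ ∑ es : Fin j → Fin d × Bool, eint ε I fun x => (nablaList ε (List.ofFn es) u x) ^ 2 := by
      have h := Finset.single_le_sum
        (f := fun es : Fin j → Fin d × Bool => eint ε I fun x => (nablaList ε (List.ofFn es) u x) ^ 2)
        (fun _ _ => zero_le) (Finset.mem_univ l.get)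
      simpa only [List.ofFn_get] using h
    have t2 : (2:ℝ≥0∞)⁻¹ ^ j *
        (∑ es : Fin j → Fin d × Bool, eint ε I fun x => (nablaList ε (List.ofFn es) u x) ^ 2)
        ≤ sobSq ε d I u := by
      rw [sobSq]
      exact Finset.single_le_sum
        (f := fun j' => (2:ℝ≥0∞)⁻¹ ^ j' *
          ∑ es : Fin j' → Fin d × Bool, eint ε I fun x => (nablaList ε (List.ofFn es) u x) ^ 2)
        (fun _ _ => zero_le) (Finset.mem_range.mpr hjlt)
    calc (eint ε I fun x => (nablaList ε l u x) ^ 2)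
        = (2:ℝ≥0∞) ^ j * ((2:ℝ≥0∞)⁻¹ ^ j * (eint ε I fun x => (nablaList ε l u x) ^ 2)) := by
          rw [← mul_assoc, ← mul_pow, ENNReal.mul_inv_cancel (by norm_num) (by norm_num),
            one_pow, one_mul]
      _ ≤ (2:ℝ≥0∞) ^ j * ((2:ℝ≥0∞)⁻¹ ^ j *
            ∑ es : Fin j → Fin d × Bool, eint ε I fun x => (nablaList ε (List.ofFn es) u x) ^ 2) := by
          exact mul_le_mul_right (mul_le_mul_right t1 _) _
      _ ≤ (2:ℝ≥0∞) ^ j * sobSq ε d I u := mul_le_mul_right t2 _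
      _ ≤ (2:ℝ≥0∞) ^ d * sobSq ε d I u := by
          exact mul_le_mul_left (pow_le_pow_right₀ one_le_two hl) _
  -- combine
  have main : ENNReal.ofReal (T ^ 2) ≤ (2:ℝ≥0∞) ^ (2 * d) * sobSq ε d I u := by
    calc ENNReal.ofReal (T ^ 2) ≤ ENNReal.ofReal (2 ^ d * R) := ENNReal.ofReal_le_ofReal hT2
      _ = (2:ℝ≥0∞) ^ d * ENNReal.ofReal R := by
          rw [ENNReal.ofReal_mul (by positivity)]
          congr 1
          rw [ENNReal.ofReal_pow (by norm_num)]
          norm_num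
      _ ≤ (2:ℝ≥0∞) ^ d * ((2:ℝ≥0∞) ^ d * sobSq ε d I u) :=
          mul_le_mul_right (hR_le.trans h_eint_le) _
      _ = (2:ℝ≥0∞) ^ (2 * d) * sobSq ε d I u := by
          rw [← mul_assoc, ← pow_add, two_mul]
  have e3 : ENNReal.ofReal T = ((ENNReal.ofReal T) ^ 2) ^ ((1:ℝ)/2) := by
    rw [← ENNReal.rpow_natCast (ENNReal.ofReal T) 2, ← ENNReal.rpow_mul]
    norm_num
  calc ENNReal.ofReal T = ((ENNReal.ofReal T) ^ 2) ^ ((1:ℝ)/2) := e3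
    _ ≤ ((2:ℝ≥0∞) ^ (2 * d) * sobSq ε d I u) ^ ((1:ℝ)/2) := by
        apply ENNReal.rpow_le_rpow _ (by norm_num)
        rw [← ENNReal.ofReal_pow hT0]
        exact main
    _ = (2:ℝ≥0∞) ^ d * (sobSq ε d I u) ^ ((1:ℝ)/2) := by
        rw [ENNReal.mul_rpow_of_nonneg _ _ (by norm_num), two_pow_rpow_half]
    _ ≤ (2:ℝ≥0∞) ^ (2 * d) * sobNorm ε d I u := by
        rw [sobNorm]
        apply mul_le_mul_left
        apply pow_le_pow_right₀ one_le_two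
        omega
private lemma ofReal_list_sum_le : ∀ l : List ℝ, ENNReal.ofReal l.sum ≤ (l.map ENNReal.ofReal).sum := by
  intro l
  induction l with
  | nil => simp
  | cons a l ih =>
    simp only [List.sum_cons, List.map_cons]
    exact (ENNReal.ofReal_add_le).trans (add_le_add le_rfl ih)

/-- Lemma B.1, lattice Sobolev embedding, uniform in the lattice spacing. -/
theorem lattice_sobolev_embedding (d : ℕ) (hd : 1 ≤ d) :
    ∃ C : ℝ, 0 < C ∧
      ∀ N : ℕ, 0 < N →
      ∀ u : Pt d → ℝ, ∀ X : Set (Pt d), X ⊆ Icube d ∩ latt d ((N : ℝ)⁻¹) →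
      ∀ x ∈ X, ENNReal.ofReal |u x| ≤
        ENNReal.ofReal C * sobNorm ((N : ℝ)⁻¹) d (Icube d ∩ latt d ((N : ℝ)⁻¹)) u := by
  refine ⟨(2:ℝ) ^ (3 * d), by positivity, ?_⟩
  intro N hN u X hX x hx
  set ε := (N:ℝ)⁻¹ with hεdef
  have hNpos : (0:ℝ) < N := by exact_mod_cast hN
  have hε : (0:ℝ) < ε := by positivity
  obtain ⟨hxI, hxL⟩ := hX hx
  obtain ⟨k, rfl⟩ := hxL
  have hNε : (N:ℝ) * ε = 1 := mul_inv_cancel₀ (ne_of_gt hNpos)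
  have hk : ∀ j, k j ∈ Finset.Icc (0:ℤ) (N:ℤ) := by
    intro j
    have h0 : (0:ℝ) ≤ ε * (k j : ℝ) := (hxI j).1
    have h1 : ε * (k j : ℝ) ≤ 1 := (hxI j).2
    have hid : (k j : ℝ) = (N:ℝ) * (ε * (k j : ℝ)) := by
      rw [← mul_assoc, hNε, one_mul]
    rw [Finset.mem_Icc]
    constructor
    · have : (0:ℝ) ≤ (k j : ℝ) := by rw [hid]; exact mul_nonneg hNpos.le h0
      exact_mod_cast this
    · have : (k j : ℝ) ≤ (N:ℝ) := by
        rw [hid]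
        calc (N:ℝ) * (ε * (k j : ℝ)) ≤ (N:ℝ) * 1 := mul_le_mul_of_nonneg_left h1 hNpos.le
          _ = (N:ℝ) := mul_one _
      exact_mod_cast this
  -- real-valued chain
  have hA : |u (toPt ε k)| ≤ BB N ε (List.finRange d) u k := le_BB N hN _ u k hk
  have hB := BB_eq_leaves N ε (List.finRange d) u k
  have hC : ∀ S ∈ (List.finRange d).sublists',
      gridS N ε (List.finRange d)
        (fun m => |nablaList ε ((S.reverse).map (fun i => (i, true))) u (toPt ε m)|) k
      ≤ ε ^ d * ∑ m ∈ KK d N, |nablaList ε ((S.reverse).map (fun i => (i, true))) u (toPt ε m)| := by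
    intro S _
    have h := gridS_le_full N ε hε.le (List.finRange d) (List.nodup_finRange d)
      (fun m => |nablaList ε ((S.reverse).map (fun i => (i, true))) u (toPt ε m)|)
      (fun m => abs_nonneg _) k (mem_KK_iff.mpr hk)
    simpa [List.length_finRange] using h
  have hD : |u (toPt ε k)| ≤ ((List.finRange d).sublists'.map (fun S =>
      ε ^ d * ∑ m ∈ KK d N, |nablaList ε ((S.reverse).map (fun i => (i, true))) u (toPt ε m)|)).sum := by
    rw [hB] at hA
    exact hA.trans (List.sum_le_sum hC)
  -- pass to ENNReal
  have hE : ENNReal.ofReal |u (toPt ε k)| ≤ (((List.finRange d).sublists'.map (fun S =>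
      ε ^ d * ∑ m ∈ KK d N, |nablaList ε ((S.reverse).map (fun i => (i, true))) u (toPt ε m)|)).map
        ENNReal.ofReal).sum :=
    (ENNReal.ofReal_le_ofReal hD).trans (ofReal_list_sum_le _)
  rw [List.map_map] at hE
  have hF : ∀ y ∈ ((List.finRange d).sublists'.map (ENNReal.ofReal ∘ fun S =>
      ε ^ d * ∑ m ∈ KK d N, |nablaList ε ((S.reverse).map (fun i => (i, true))) u (toPt ε m)|)),
      y ≤ (2:ℝ≥0∞) ^ (2 * d) * sobNorm ε d (Icube d ∩ latt d ε) u := by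
    intro y hy
    obtain ⟨S, hS, rfl⟩ := List.mem_map.mp hy
    have hlen : ((S.reverse).map (fun i : Fin d => (i, true))).length ≤ d := by
      rw [List.length_map, List.length_reverse]
      have := (List.mem_sublists'.mp hS).length_le
      simpa [List.length_finRange] using this
    exact leaf_bound N hN u _ hlen
  have hG := (List.sum_le_card_nsmul _ _ hF)
  rw [List.length_map, List.length_sublists', List.length_finRange] at hG
  refine hE.trans (hG.trans ?_)
  -- arrange constants
  have hconst : (2 ^ d : ℕ) • ((2:ℝ≥0∞) ^ (2 * d) * sobNorm ε d (Icube d ∩ latt d ε) u)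
      = ENNReal.ofReal ((2:ℝ) ^ (3 * d)) * sobNorm ε d (Icube d ∩ latt d ε) u := by
    rw [nsmul_eq_mul, ← mul_assoc]
    congr 1
    rw [ENNReal.ofReal_pow (by norm_num), ENNReal.ofReal_ofNat]
    push_cast
    rw [← pow_add]
    congr 1
    omega
  rw [hconst]
end FRD
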